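/- arXiv:1405.0472 — 3 statements merged into one kernel-verified Lean document; each statement's English description precedes it below -/
import Mathlib

section
/- Let A be a commutative Noetherian ring with unity, let 𝔞 be an ideal in A[x₁,…,xₙ], and fix a monomial order. Let T be the set of terms a·x^α (a ∈ A nonzero) such that a·x^α does not belong to the leading term ideal ⟨Lt(𝔞)⟩. Then the residue classes T + 𝔞 generate the quotient A[x₁,…,xₙ]/𝔞 as an A-module. -/
open MvPolynomial

/-- The leading monomial (multidegree) of a polynomial with respect to a monomial order. -/
noncomputable def mDeg {A : Type*} [CommRing A] {n : ℕ} (m : MonomialOrder (Fin n))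
    (f : MvPolynomial (Fin n) A) : Fin n →₀ ℕ :=
  m.toSyn.symm (f.support.sup m.toSyn)

/-- The leading coefficient of a polynomial with respect to a monomial order. -/
noncomputable def mLC {A : Type*} [CommRing A] {n : ℕ} (m : MonomialOrder (Fin n))
    (f : MvPolynomial (Fin n) A) : A :=
  f.coeff (mDeg m f)

/-- The leading term `Lt(f) = Lc(f)·Lm(f)` of a polynomial. -/
noncomputable def leadTerm {A : Type*} [CommRing A] {n : ℕ} (m : MonomialOrder (Fin n))
    (f : MvPolynomial (Fin n) A) : MvPolynomial (Fin n) A :=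
  monomial (mDeg m f) (mLC m f)

/-- The leading term ideal `⟨Lt(𝔞)⟩` of an ideal. -/
noncomputable def leadTermIdeal {A : Type*} [CommRing A] {n : ℕ} (m : MonomialOrder (Fin n))
    (𝔞 : Ideal (MvPolynomial (Fin n) A)) : Ideal (MvPolynomial (Fin n) A) :=
  Ideal.span {p | ∃ f ∈ 𝔞, f ≠ 0 ∧ p = leadTerm m f}

section Aux

variable {A : Type*} [CommRing A] {n : ℕ} (m : MonomialOrder (Fin n))

theorem mDeg_mem_support {f : MvPolynomial (Fin n) A} (hf : f ≠ 0) :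
    mDeg m f ∈ f.support := by
  obtain ⟨b, hb, hsup⟩ := Finset.exists_mem_eq_sup f.support
    (by simpa using hf) m.toSyn
  unfold mDeg
  rw [hsup, m.toSyn.symm_apply_apply]
  exact hb

theorem le_mDeg {f : MvPolynomial (Fin n) A} {β : Fin n →₀ ℕ}
    (hβ : β ∈ f.support) : m.toSyn β ≤ m.toSyn (mDeg m f) := by
  unfold mDeg
  rw [m.toSyn.apply_symm_apply]
  exact Finset.le_sup hβ

/-- If a nonzero term `monomial α a` lies in the leading term ideal, then there is an
element `g` of the ideal with leading monomial `α` and leading coefficient `a`. -/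
theorem coeff_aux (α : Fin n →₀ ℕ) (h q : MvPolynomial (Fin n) A) :
    coeff α ((if mDeg m q ≤ α then
        monomial (α - mDeg m q) (coeff (α - mDeg m q) h) else 0) * q)
      = coeff α (h * leadTerm m q) := by
  rw [leadTerm, coeff_mul_monomial']
  split_ifs with hle
  · rw [coeff_monomial_mul', if_pos tsub_le_self, tsub_tsub_cancel_of_le hle]
    rfl
  · simp

theorem exists_of_mem_leadTermIdeal {𝔞 : Ideal (MvPolynomial (Fin n) A)}
    {a : A} {α : Fin n →₀ ℕ} (ha : a ≠ 0)
    (h : (monomial α a : MvPolynomial (Fin n) A) ∈ leadTermIdeal m 𝔞) :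
    ∃ g ∈ 𝔞, g.coeff α = a ∧ ∀ β ∈ g.support, m.toSyn β ≤ m.toSyn α := by
  classical
  rw [leadTermIdeal, Ideal.span, Submodule.mem_span_set] at h
  obtain ⟨c, hc, hsum⟩ := h
  -- For each p in the support of c, pick a witness f_p ∈ 𝔞 with p = leadTerm f_p.
  have hwit : ∀ p ∈ c.support, ∃ f, f ∈ 𝔞 ∧ f ≠ 0 ∧ p = leadTerm m f := by
    intro p hp
    obtain ⟨f, hf1, hf2, hf3⟩ := hc hp
    exact ⟨f, hf1, hf2, hf3⟩
  choose! F hF1 hF2 hF3 using hwit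
  set g : MvPolynomial (Fin n) A :=
    ∑ p ∈ c.support,
      (if mDeg m (F p) ≤ α then
        monomial (α - mDeg m (F p)) ((c p).coeff (α - mDeg m (F p))) else 0) * F p with hg
  refine ⟨g, ?_, ?_, ?_⟩
  · exact Ideal.sum_mem _ fun p hp => Ideal.mul_mem_left _ _ (hF1 p hp)
  · have hca : (monomial α a : MvPolynomial (Fin n) A).coeff α = a := by simp
    rw [← hsum] at hca
    rw [hg, ← hca]
    rw [Finsupp.sum, MvPolynomial.coeff_sum, MvPolynomial.coeff_sum]
    apply Finset.sum_congr rfl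
    intro p hp
    calc coeff α ((if mDeg m (F p) ≤ α then
            monomial (α - mDeg m (F p)) (coeff (α - mDeg m (F p)) (c p)) else 0) * F p)
        = coeff α (c p * leadTerm m (F p)) := coeff_aux m α (c p) (F p)
      _ = coeff α (c p • p) := by rw [smul_eq_mul, ← hF3 p hp]
  · intro β hβ
    rw [MvPolynomial.mem_support_iff, hg, MvPolynomial.coeff_sum] at hβ
    obtain ⟨p, hp, hne⟩ := Finset.exists_ne_zero_of_sum_ne_zero hβ
    by_cases hle : mDeg m (F p) ≤ α
    · rw [if_pos hle, coeff_monomial_mul'] at hne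
      split_ifs at hne with h2
      · have h3 : β - (α - mDeg m (F p)) ∈ (F p).support := by
          rw [MvPolynomial.mem_support_iff]
          intro h0
          rw [h0, mul_zero] at hne
          exact hne rfl
        have h4 := le_mDeg m h3
        have h5 : β = (α - mDeg m (F p)) + (β - (α - mDeg m (F p))) :=
          (add_tsub_cancel_of_le h2).symm
        calc m.toSyn β
            = m.toSyn (α - mDeg m (F p)) + m.toSyn (β - (α - mDeg m (F p))) := by
              rw [← map_add, ← h5]
          _ ≤ m.toSyn (α - mDeg m (F p)) + m.toSyn (mDeg m (F p)) := by
              exact add_le_add_right h4 _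
          _ = m.toSyn ((α - mDeg m (F p)) + mDeg m (F p)) := by rw [map_add]
          _ = m.toSyn α := by rw [tsub_add_cancel_of_le hle]
      · exact absurd rfl hne
    · rw [if_neg hle, zero_mul, MvPolynomial.coeff_zero] at hne
      exact absurd rfl hne

end Aux

/-- The residue classes of the terms `a·x^α` not lying in the leading term ideal of `𝔞`
generate `A[x₁,…,xₙ]/𝔞` as an `A`-module. -/
theorem terms_outside_leadTermIdeal_generate_quotient
    {A : Type*} [CommRing A] [IsNoetherianRing A] {n : ℕ}
    (m : MonomialOrder (Fin n)) (𝔞 : Ideal (MvPolynomial (Fin n) A)) :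
    Submodule.span A
      (Ideal.Quotient.mk 𝔞 ''
        {q | ∃ (a : A) (α : Fin n →₀ ℕ), a ≠ 0 ∧ q = monomial α a ∧
              q ∉ leadTermIdeal m 𝔞}) = ⊤ := by
  classical
  set S := Submodule.span A
      (Ideal.Quotient.mk 𝔞 ''
        {q | ∃ (a : A) (α : Fin n →₀ ℕ), a ≠ 0 ∧ q = monomial α a ∧
              q ∉ leadTermIdeal m 𝔞}) with hS
  have key : ∀ (d : m.syn), ∀ f : MvPolynomial (Fin n) A,
      m.toSyn (mDeg m f) = d → Ideal.Quotient.mk 𝔞 f ∈ S := by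
    intro d
    induction d using WellFoundedLT.induction with
    | ind d ih =>
      intro f hf
      by_cases hf0 : f = 0
      · rw [hf0, map_zero]; exact zero_mem S
      have hrec : ∀ g : MvPolynomial (Fin n) A,
          (∀ β ∈ g.support, m.toSyn β < d) → Ideal.Quotient.mk 𝔞 g ∈ S := by
        intro g hg
        by_cases hg0 : g = 0
        · rw [hg0, map_zero]; exact zero_mem S
        · exact ih _ (hg _ (mDeg_mem_support m hg0)) g rfl
      set α := mDeg m f with hα
      set a := mLC m f with ha
      have hfa : f.coeff α = a := rfl
      have ha0 : a ≠ 0 := by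
        rw [ha, mLC, ← MvPolynomial.mem_support_iff]
        exact mDeg_mem_support m hf0
      by_cases hlt : (monomial α a : MvPolynomial (Fin n) A) ∈ leadTermIdeal m 𝔞
      · obtain ⟨g, hg𝔞, hgα, hgdeg⟩ := exists_of_mem_leadTermIdeal m ha0 hlt
        have h1 : Ideal.Quotient.mk 𝔞 f = Ideal.Quotient.mk 𝔞 (f - g) := by
          rw [map_sub, (Ideal.Quotient.eq_zero_iff_mem).2 hg𝔞, sub_zero]
        rw [h1]
        apply hrec
        intro β hβ
        rw [MvPolynomial.mem_support_iff, MvPolynomial.coeff_sub] at hβ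
        have hβα : β ≠ α := by
          intro h
          rw [h, hgα, hfa, sub_self] at hβ
          exact hβ rfl
        have hle : m.toSyn β ≤ m.toSyn α := by
          rcases ne_or_eq (f.coeff β) 0 with h | h
          · exact le_mDeg m (MvPolynomial.mem_support_iff.2 h)
          · rw [h, zero_sub, neg_ne_zero] at hβ
            exact hgdeg β (MvPolynomial.mem_support_iff.2 hβ)
        rw [← hf]
        exact lt_of_le_of_ne hle (fun h => hβα (m.toSyn.injective h))
      · have hterm : Ideal.Quotient.mk 𝔞 (monomial α a) ∈ S := by
          apply Submodule.subset_span
          exact ⟨monomial α a, ⟨a, α, ha0, rfl, hlt⟩, rfl⟩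
        have h1 : Ideal.Quotient.mk 𝔞 f
            = Ideal.Quotient.mk 𝔞 (monomial α a) + Ideal.Quotient.mk 𝔞 (f - monomial α a) := by
          rw [← map_add]; ring_nf
        rw [h1]
        refine add_mem hterm (hrec _ ?_)
        intro β hβ
        rw [MvPolynomial.mem_support_iff, MvPolynomial.coeff_sub] at hβ
        have hβα : β ≠ α := by
          intro h
          rw [h, MvPolynomial.coeff_monomial, if_pos rfl, hfa, sub_self] at hβ
          exact hβ rfl
        have hle : m.toSyn β ≤ m.toSyn α := by
          have h2 : f.coeff β ≠ 0 := by
            intro h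
            rw [h, MvPolynomial.coeff_monomial, if_neg (fun h' => hβα h'.symm), zero_sub,
              neg_zero] at hβ
            exact hβ rfl
          exact le_mDeg m (MvPolynomial.mem_support_iff.2 h2)
        rw [← hf]
        exact lt_of_le_of_ne hle (fun h => hβα (m.toSyn.injective h))
  rw [eq_top_iff]
  intro x _
  obtain ⟨f, rfl⟩ := Ideal.Quotient.mk_surjective x
  exact key _ f rfl
end

section
/- Let A = 2ℤ (the rng of even integers, without unity) and let 𝔞 = ⟨2x, 2y⟩ ⊆ (2ℤ)[x,y]. Then the quotient (2ℤ)[x,y]/𝔞 is not a free (2ℤ)-module; in particular the element 0 + 𝔞 has more than one representation, e.g. 0 + 𝔞 = 2·(6x + 𝔞). -/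
open MvPolynomial

/-- The non-unital commutative ring `(2ℤ)[x,y]`, realized as the non-unital subring of
`ℤ[x,y]` consisting of polynomials with all coefficients even. -/
noncomputable def evenPolys : NonUnitalSubring (MvPolynomial (Fin 2) ℤ) where
  carrier := {q | ∃ p : MvPolynomial (Fin 2) ℤ, q = 2 * p}
  zero_mem' := ⟨0, by ring⟩
  add_mem' := by rintro a b ⟨p, rfl⟩ ⟨q, rfl⟩; exact ⟨p + q, by ring⟩
  neg_mem' := by rintro a ⟨p, rfl⟩; exact ⟨-p, by ring⟩
  mul_mem' := by rintro a b ⟨p, rfl⟩ ⟨q, rfl⟩; exact ⟨2 * (p * q), by ring⟩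

/-- The two-sided ideal `𝔞 = ⟨2x, 2y⟩` of `(2ℤ)[x,y]`. -/
noncomputable def aIdeal : TwoSidedIdeal evenPolys :=
  TwoSidedIdeal.span {⟨2 * X 0, ⟨X 0, rfl⟩⟩, ⟨2 * X 1, ⟨X 1, rfl⟩⟩}

/-- The quotient rng `(2ℤ)[x,y]/𝔞`. -/
noncomputable def Qrng : Type := aIdeal.ringCon.Quotient

noncomputable instance : NonUnitalRing Qrng :=
  inferInstanceAs (NonUnitalRing aIdeal.ringCon.Quotient)

lemma two_eq_C : (2 : MvPolynomial (Fin 2) ℤ) = C 2 := by simp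
lemma four_eq_C : (4 : MvPolynomial (Fin 2) ℤ) = C 4 := by simp

lemma prod_coeff (x y : evenPolys) :
    (4:ℤ) ∣ MvPolynomial.coeff (Finsupp.single (0 : Fin 2) 2) ((x * y : evenPolys) : MvPolynomial (Fin 2) ℤ) := by
  obtain ⟨p, hp⟩ := x.2
  obtain ⟨s, hs⟩ := y.2
  have h4 : ((x * y : evenPolys) : MvPolynomial (Fin 2) ℤ) = C (4:ℤ) * (p * s) := by
    push_cast [hp, hs]
    rw [← four_eq_C]
    ring
  exact ⟨_, by rw [h4, MvPolynomial.coeff_C_mul]⟩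

noncomputable def badIdeal : TwoSidedIdeal evenPolys :=
  TwoSidedIdeal.mk' {q | (4:ℤ) ∣ MvPolynomial.coeff (Finsupp.single (0 : Fin 2) 2) q.1}
    ⟨0, by simp⟩
    (by rintro x y ⟨a, ha⟩ ⟨b, hb⟩
        exact ⟨a + b, by push_cast [MvPolynomial.coeff_add, ha, hb]; ring⟩)
    (by rintro x ⟨a, ha⟩
        exact ⟨-a, by push_cast [MvPolynomial.coeff_neg, ha]; ring⟩)
    (fun {x y} _ => prod_coeff x y)
    (fun {x y} _ => prod_coeff x y)

lemma gen_coeff : MvPolynomial.coeff (Finsupp.single (0 : Fin 2) 2) (2 * X 0 : MvPolynomial (Fin 2) ℤ) = 0 := by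
  rw [two_eq_C, MvPolynomial.coeff_C_mul]
  simp [MvPolynomial.coeff_X', Finsupp.single_eq_single_iff]

lemma gen_coeff1 : MvPolynomial.coeff (Finsupp.single (0 : Fin 2) 2) (2 * X 1 : MvPolynomial (Fin 2) ℤ) = 0 := by
  rw [two_eq_C, MvPolynomial.coeff_C_mul]
  simp [MvPolynomial.coeff_X', Finsupp.single_eq_single_iff]

lemma u_coeff : MvPolynomial.coeff (Finsupp.single (0 : Fin 2) 2) (2 * (X 0 * X 0) : MvPolynomial (Fin 2) ℤ) = 2 := by
  have h : (X 0 * X 0 : MvPolynomial (Fin 2) ℤ) = X 0 ^ 2 := by ring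
  rw [two_eq_C, MvPolynomial.coeff_C_mul, h, MvPolynomial.coeff_X_pow]
  simp

lemma aIdeal_le_bad : aIdeal ≤ badIdeal := by
  intro x hx
  rw [aIdeal, TwoSidedIdeal.mem_span_iff] at hx
  refine hx badIdeal ?_
  rintro y (rfl | rfl) <;> rw [SetLike.mem_coe, badIdeal, TwoSidedIdeal.mem_mk'] <;>
    exact ⟨0, by simp [gen_coeff, gen_coeff1]⟩

lemma mk_eq_zero_iff (q : evenPolys) :
    (aIdeal.ringCon.toQuotient q : Qrng) = 0 ↔ q ∈ aIdeal := by
  show (q : aIdeal.ringCon.Quotient) = 0 ↔ _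
  rw [← RingCon.coe_zero, RingCon.eq]
  exact Iff.rfl


/-- The quotient `(2ℤ)[x,y]/⟨2x,2y⟩` is not free as a `2ℤ`-module (no family of elements
gives unique representations by linear combinations with even integer coefficients); in
particular the zero class has more than one representation, e.g. `0 + 𝔞 = 2·(6x + 𝔞)`. -/
theorem evenPolys_quotient_not_free :
    (¬ ∃ (ι : Type) (b : ι → Qrng), ∀ q : Qrng, ∃! c : ι →₀ ℤ,
        (∀ i, Even (c i)) ∧ q = c.sum fun i z => z • b i) ∧
    (2 : ℤ) • (aIdeal.ringCon.toQuotient ⟨6 * X 0, ⟨3 * X 0, by ring⟩⟩ : Qrng) = 0 := by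
  have h2x : (⟨2 * X 0, ⟨X 0, rfl⟩⟩ : evenPolys) ∈ aIdeal :=
    TwoSidedIdeal.subset_span (Set.mem_insert _ _)
  constructor
  · rintro ⟨ι, b, h⟩
    set q : evenPolys := ⟨2 * (X 0 * X 0), ⟨X 0 * X 0, rfl⟩⟩ with hq
    set u : Qrng := aIdeal.ringCon.toQuotient q with hu
    have hu0 : (2:ℤ) • u = 0 := by
      have hmem : q + q ∈ aIdeal := by
        have : q + q = (⟨2 * X 0, ⟨X 0, rfl⟩⟩ : evenPolys) * ⟨2 * X 0, ⟨X 0, rfl⟩⟩ := by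
          apply Subtype.ext; push_cast; ring
        rw [this]
        exact aIdeal.mul_mem_right _ _ h2x
      have : (2:ℤ) • u = aIdeal.ringCon.toQuotient (q + q) := by
        rw [two_smul]
        exact (RingCon.coe_add _ _ _).symm
      rw [this]
      exact (mk_eq_zero_iff _).mpr hmem
    have hune : u ≠ 0 := by
      intro h0
      have hmem : q ∈ aIdeal := (mk_eq_zero_iff q).mp h0
      have := aIdeal_le_bad hmem
      rw [badIdeal, TwoSidedIdeal.mem_mk'] at this
      have h2 : (4:ℤ) ∣ MvPolynomial.coeff (Finsupp.single (0 : Fin 2) 2)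
          (2 * (X 0 * X 0) : MvPolynomial (Fin 2) ℤ) := this
      rw [u_coeff] at h2
      omega
    obtain ⟨c, ⟨hce, hcr⟩, -⟩ := h u
    obtain ⟨d, -, hd⟩ := h 0
    have key : ((2:ℤ) • c).sum (fun i z => z • b i) = (2:ℤ) • (c.sum fun i z => z • b i) := by
      rw [Finsupp.sum_smul_index' (by simp), Finsupp.smul_sum]
      simp [mul_smul, smul_eq_mul]
    have h1 : (2:ℤ) • c = d := by
      refine hd _ ⟨fun i => ⟨c i, by simp [two_mul]⟩, ?_⟩
      rw [key, ← hcr, hu0]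
    have h2 : (0 : ι →₀ ℤ) = d := by
      refine hd _ ⟨by simp, by simp⟩
    have hc0 : c = 0 := by
      have := h1.trans h2.symm
      have h2ne : (2:ℤ) ≠ 0 := by norm_num
      exact (smul_eq_zero.mp this).resolve_left h2ne
    rw [hc0] at hcr
    simp at hcr
    exact hune hcr
  · have hmem : (⟨6 * X 0, ⟨3 * X 0, by ring⟩⟩ : evenPolys) + ⟨6 * X 0, ⟨3 * X 0, by ring⟩⟩ ∈ aIdeal := by
      have : (⟨6 * X 0, ⟨3 * X 0, by ring⟩⟩ : evenPolys) + ⟨6 * X 0, ⟨3 * X 0, by ring⟩⟩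
          = (6:ℤ) • (⟨2 * X 0, ⟨X 0, rfl⟩⟩ : evenPolys) := by
        apply Subtype.ext
        push_cast [MvPolynomial.smul_eq_C_mul]
        rw [show (C (6:ℤ) : MvPolynomial (Fin 2) ℤ) = 6 by simp]
        ring
      rw [this]
      exact aIdeal.zsmul_mem 6 h2x
    have : (2:ℤ) • (aIdeal.ringCon.toQuotient ⟨6 * X 0, ⟨3 * X 0, by ring⟩⟩ : Qrng)
        = aIdeal.ringCon.toQuotient (⟨6 * X 0, ⟨3 * X 0, by ring⟩⟩ + ⟨6 * X 0, ⟨3 * X 0, by ring⟩⟩) := by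
      rw [two_smul]
      exact (RingCon.coe_add _ _ _).symm
    rw [this, mk_eq_zero_iff]
    exact hmem
end

section
/- Let A be a commutative Noetherian ring, 𝔞 ⊆ A[x₁,…,xₙ] an ideal such that A[x₁,…,xₙ]/𝔞 is a finitely generated A-module, 𝒪 an order ideal, and G = {g₁,…,g_s} ⊆ 𝔞 an acyclic 𝒪-border basis of 𝔞. Then 𝔞 = ⟨g₁,…,g_s⟩, i.e., G generates the ideal 𝔞. -/
open MvPolynomial

/-- **An acyclic border basis generates the ideal.**
Let `𝔞 ⊆ A[x₁,…,xₙ]` be an ideal with finitely generated quotient, `𝒪` an order ideal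
with monomial part `{x^{α 0},…,x^{α (k-1)}}` and coset representatives `C j` forming a
weak⁺ basis of the quotient (unique representation), and let `G = {g₀,…,g_{s-1}} ⊆ 𝔞` be
an acyclic `𝒪`-border basis; acyclicity guarantees that the border division algorithm
terminates, i.e. every `f` has a representation `f = Σ fᵢ gᵢ + Σⱼ aⱼ x^{α j}` with
`aⱼ ∈ C j`. Then `𝔞 = ⟨g₀,…,g_{s-1}⟩`. -/
theorem borderBasis_generates_ideal
    {A : Type*} [CommRing A] [IsNoetherianRing A] {n : ℕ}
    (𝔞 : Ideal (MvPolynomial (Fin n) A))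
    (hfg : Module.Finite A (MvPolynomial (Fin n) A ⧸ 𝔞))
    (ℐ : (Fin n →₀ ℕ) → Ideal A)
    (hmono : ∀ β γ : Fin n →₀ ℕ, β ≤ γ → ℐ β ≤ ℐ γ)
    (k : ℕ) (α : Fin k → (Fin n →₀ ℕ)) (C : Fin k → Set A)
    (huniq : ∀ f : MvPolynomial (Fin n) A, ∃! c : Fin k → A,
      (∀ j, c j ∈ C j) ∧ f - ∑ j, monomial (α j) (c j) ∈ 𝔞)
    (s : ℕ) (G : Fin s → MvPolynomial (Fin n) A)
    (hG : ∀ i, G i ∈ 𝔞)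
    (hdiv : ∀ f : MvPolynomial (Fin n) A,
      ∃ (q : Fin s → MvPolynomial (Fin n) A) (a : Fin k → A),
        (∀ j, a j ∈ C j) ∧ f = ∑ i, q i * G i + ∑ j, monomial (α j) (a j)) :
    Ideal.span (Set.range G) = 𝔞 := by
  apply le_antisymm
  · rw [Ideal.span_le]
    rintro _ ⟨i, rfl⟩
    exact hG i
  · intro f hf
    obtain ⟨q, a, ha, hrep⟩ := hdiv f
    obtain ⟨q0, a0, ha0, hrep0⟩ := hdiv 0
    have hspan : ∀ (q : Fin s → MvPolynomial (Fin n) A),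
        (∑ i, q i * G i) ∈ Ideal.span (Set.range G) := by
      intro q
      exact Ideal.sum_mem _ fun i _ => Ideal.mul_mem_left _ _
        (Ideal.subset_span ⟨i, rfl⟩)
    obtain ⟨c, hc, hcuniq⟩ := huniq 0
    have h1 : a = c := by
      apply hcuniq
      refine ⟨ha, ?_⟩
      have : f - ∑ j, monomial (α j) (a j) = ∑ i, q i * G i := by
        rw [hrep]; ring
      have hmem : f - ∑ j, monomial (α j) (a j) ∈ 𝔞 := by
        rw [this]; exact Ideal.span_le.mpr (by rintro _ ⟨i, rfl⟩; exact hG i) (hspan q)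
      have : (0 : MvPolynomial (Fin n) A) - ∑ j, monomial (α j) (a j)
          = (f - ∑ j, monomial (α j) (a j)) - f := by ring
      rw [this]
      exact Ideal.sub_mem _ hmem hf
    have h2 : a0 = c := by
      apply hcuniq
      refine ⟨ha0, ?_⟩
      have : (0 : MvPolynomial (Fin n) A) - ∑ j, monomial (α j) (a0 j)
          = ∑ i, q0 i * G i := by
        rw [hrep0]; ring
      rw [this]
      exact Ideal.span_le.mpr (by rintro _ ⟨i, rfl⟩; exact hG i) (hspan q0)
    have hmon : (∑ j, monomial (α j) (a j)) ∈ Ideal.span (Set.range G) := by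
      rw [h1, ← h2]
      have : (∑ j, monomial (α j) (a0 j)) = -(∑ i, q0 i * G i) := by
        have := hrep0; linear_combination -this
      rw [this]
      exact neg_mem (hspan q0)
    rw [hrep]
    exact Ideal.add_mem _ (hspan q) hmon
end
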